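/- Let (X, d) be a finite metric space with |X| = n ≥ 2, let x : Fin n → X be a priority ordering (a bijection; x j has priority (j : ℕ) + 1), let Δ = diam X be the diameter of X, and let α : ℕ → ℝ be a proper priority function. Then there exists a subset X₁ ⊆ X with X₁ nonempty and X₁ ≠ X such that for all i, j : Fin n with x i ∈ X₁ and x j ∉ X₁, one has Δ ≤ 2 · α (min (i : ℕ) (j : ℕ) + 1) · d(x i, x j). (That is, X can be split into two nonempty parts so that no separated pair incurs prioritized distortion more than 2α(·) at scale Δ.) -/

import Mathlib

/-- A proper priority function: positive on `i ≥ 1`, nondecreasing (for `i ≥ 1`), and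
with `∑_{i=1}^∞ 1/α(i)` summable with sum `< 1`. -/
def IsProperPriority (α : ℕ → ℝ) : Prop :=
  (∀ i : ℕ, 1 ≤ i → 0 < α i) ∧
  (∀ i j : ℕ, 1 ≤ i → i ≤ j → α i ≤ α j) ∧
  Summable (fun i : ℕ => 1 / α (i + 1)) ∧
  ∑' i : ℕ, 1 / α (i + 1) < 1

/-- The partition step for the prioritized embedding into an ultrametric: a finite
metric space with at least 2 points can be split into a nonempty proper subset `X₁`
and its complement so that every separated pair `x_i ∈ X₁`, `x_j ∉ X₁` satisfies
`diam X ≤ 2·α(min(i,j)+1)·d(x_i, x_j)`. -/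
theorem prioritized_ultrametric_partition_step
    (X : Type*) [MetricSpace X] [Fintype X] (n : ℕ) (hn : 2 ≤ n)
    (hcard : Fintype.card X = n) (x : Fin n ≃ X) (α : ℕ → ℝ)
    (hα : IsProperPriority α) :
    ∃ X₁ : Set X, X₁.Nonempty ∧ X₁ ≠ Set.univ ∧
      ∀ i j : Fin n, x i ∈ X₁ → x j ∉ X₁ →
        Metric.diam (Set.univ : Set X) ≤
          2 * α (min (i : ℕ) (j : ℕ) + 1) * dist (x i) (x j) := by

  obtain ⟨hαpos, hαmono, hαsum, hαlt⟩ := hα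
  set Δ := Metric.diam (Set.univ : Set X) with hΔ
  have hbdd : Bornology.IsBounded (Set.univ : Set X) := Set.finite_univ.isBounded
  -- Δ > 0
  have hΔpos : 0 < Δ := by
    obtain ⟨a, b, hab⟩ := Fintype.exists_pair_of_one_lt_card (by omega : 1 < Fintype.card X)
    have := Metric.dist_le_diam_of_mem hbdd (Set.mem_univ a) (Set.mem_univ b)
    have := dist_pos.mpr hab
    linarith
  -- the diameter is attained
  obtain ⟨⟨c, b⟩, -, hmax⟩ := Finset.exists_max_image (Finset.univ ×ˢ Finset.univ)
    (fun p : X × X => dist p.1 p.2) ⟨(x ⟨0, by omega⟩, x ⟨0, by omega⟩), by simp⟩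
  have hcb : dist c b = Δ := by
    apply le_antisymm (Metric.dist_le_diam_of_mem hbdd trivial trivial)
    exact Metric.diam_le_of_forall_dist_le dist_nonneg
      (fun u _ v _ => hmax (u, v) (by simp))
  -- the "gap" function
  set g : ℕ → ℝ := fun m => Δ / (2 * α (m + 1)) with hg
  have hgpos : ∀ m : ℕ, 0 < g m := fun m =>
    div_pos hΔpos (by have := hαpos (m + 1) (by omega); linarith)
  -- forbidden set and radius choice
  set F : Set ℝ := ⋃ m : Fin n, Set.Ioo (dist c (x m) - g m) (dist c (x m) + g m) with hF
  have hvol : MeasureTheory.volume F < MeasureTheory.volume (Set.Ico (0:ℝ) Δ) := by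
    rw [Real.volume_Ico]
    calc MeasureTheory.volume F
        ≤ ∑ m : Fin n, MeasureTheory.volume
            (Set.Ioo (dist c (x m) - g m) (dist c (x m) + g m)) :=
          MeasureTheory.measure_iUnion_fintype_le _ _
      _ = ∑ m : Fin n, ENNReal.ofReal (2 * g (m : ℕ)) := by
          refine Finset.sum_congr rfl fun m _ => ?_
          rw [Real.volume_Ioo]; ring_nf
      _ = ENNReal.ofReal (∑ m : Fin n, 2 * g (m : ℕ)) :=
          (ENNReal.ofReal_sum_of_nonneg (fun m _ => by have := hgpos (m:ℕ); linarith)).symm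
      _ < ENNReal.ofReal (Δ - 0) := by
          rw [ENNReal.ofReal_lt_ofReal_iff (by linarith)]
          have hsum : ∑ m : Fin n, 2 * g (m : ℕ) = Δ * ∑ m ∈ Finset.range n, 1 / α (m + 1) := by
            rw [Finset.mul_sum, ← Fin.sum_univ_eq_sum_range (fun m => Δ * (1 / α (m + 1))) n]
            refine Finset.sum_congr rfl fun m _ => ?_
            have := hαpos ((m:ℕ) + 1) (by omega)
            field_simp [hg]
            simp only [hg]; field_simp
          have hlt1 : ∑ m ∈ Finset.range n, 1 / α (m + 1) < 1 := by
            have := Summable.sum_le_tsum (Finset.range n)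
              (fun i _ => by have := hαpos (i+1) (by omega); positivity) hαsum
            linarith
          have : Δ * ∑ m ∈ Finset.range n, 1 / α (m + 1) < Δ * 1 := by
            apply mul_lt_mul_of_pos_left hlt1 hΔpos
          rw [hsum]; linarith
  have hns : ¬ (Set.Ico (0:ℝ) Δ ⊆ F) := fun h => absurd (MeasureTheory.measure_mono h) (not_le.mpr hvol)
  obtain ⟨r, hrI, hrF⟩ := Set.not_subset.mp hns
  obtain ⟨hr0, hrΔ⟩ := hrI
  have hravoid : ∀ m : Fin n,
      r ∉ Set.Ioo (dist c (x m) - g m) (dist c (x m) + g m) := by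
    intro m hmem
    exact hrF (Set.mem_iUnion.mpr ⟨m, hmem⟩)
  -- the partition
  refine ⟨{y | dist c y ≤ r}, ⟨c, by simp [hr0]⟩, ?_, ?_⟩
  · intro h
    have hb : dist c b ≤ r := by rw [Set.eq_univ_iff_forall] at h; exact h b
    rw [hcb] at hb; linarith
  · intro i j hi hj
    simp only [Set.mem_setOf_eq] at hi hj
    push_neg at hj
    -- inside point is deep inside
    have hdi : dist c (x i) ≤ r - g i := by
      have h := hravoid i
      simp only [Set.mem_Ioo, not_and, not_lt] at h
      have h1 : dist c (x i) - g i < r := by have := hgpos (i:ℕ); linarith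
      have := h h1; linarith
    -- outside point is far outside
    have hdj : r + g j ≤ dist c (x j) := by
      have h := hravoid j
      simp only [Set.mem_Ioo, not_and, not_lt] at h
      by_contra hcon
      push_neg at hcon
      have h1 : dist c (x j) - g j < r := by linarith
      have := h h1; linarith
    have htri : dist c (x j) ≤ dist c (x i) + dist (x i) (x j) := dist_triangle _ _ _
    have hdij : g i + g j ≤ dist (x i) (x j) := by linarith
    have hgmin : g (min (i : ℕ) (j : ℕ)) ≤ g i + g j := by
      rcases min_choice (i : ℕ) (j : ℕ) with h | h <;> rw [h] <;>
        [have := hgpos (j:ℕ); have := hgpos (i:ℕ)] <;> linarith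
    have hd : g (min (i : ℕ) (j : ℕ)) ≤ dist (x i) (x j) := le_trans hgmin (by linarith)
    have hαp : 0 < 2 * α (min (i : ℕ) (j : ℕ) + 1) := by
      have := hαpos (min (i : ℕ) (j : ℕ) + 1) (by omega); linarith
    rw [hg] at hd
    simp only at hd
    rw [div_le_iff₀ hαp] at hd
    linarith [hd, mul_comm (dist (x i) (x j)) (2 * α (min (i : ℕ) (j : ℕ) + 1))]
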